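/- Suppose 2 < B < 2+√2 and the initial normalized variance Q_0 < (B/(B-1))^2 - 2. Then there exists δ_0 > 0 with 2(1+δ_0)((B-1)/B)^2 < 1 such that, as long as P_n ≤ δ_0 B(B-1)/4, the sequence Q_n satisfies Q_{n+1} ≤ 2((B-1)/B)^2 (1+δ_0)(Q_n + Q_n^2/2) and hence decays exponentially: Q_n ≤ c_1 (2(1+δ_0)((B-1)/B)^2)^n Q_0 for some c_1 = c_1(B, Q_0). -/

import Mathlib

set_option maxHeartbeats 1600000


/-- Irrelevant-disorder regime `2 < B < 2 + √2`: if the initial normalized variance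
satisfies `Q 0 < (B/(B-1))^2 - 2`, then there exists `δ0 > 0` with
`2(1+δ0)((B-1)/B)^2 < 1` such that, as long as `P m ≤ δ0 B (B-1)/4`, one has
`Q (n+1) ≤ 2((B-1)/B)^2 (1+δ0)(Q n + Q n^2/2)`, and hence `Q` decays exponentially:
`Q n ≤ c1 (2(1+δ0)((B-1)/B)^2)^n Q 0` for some `c1 > 0`. Here `Q` satisfies
`Q (n+1) = E n · 2((B-1)/B)^2 · (Q n + Q n^2/2)` with
`E n ≤ 1 + 4 P n/(B(B-1))`. -/
theorem stmt18 (B : ℝ) (hB : 2 < B) (hB2 : B < 2 + Real.sqrt 2)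
    (Q P E : ℕ → ℝ)
    (hQ0 : Q 0 < (B / (B - 1)) ^ 2 - 2)
    (hQnn : ∀ n, 0 ≤ Q n) (hPnn : ∀ n, 0 ≤ P n)
    (hE : ∀ n, E n ≤ 1 + 4 * P n / (B * (B - 1)))
    (hrec : ∀ n, Q (n + 1) = E n * (2 * ((B - 1) / B) ^ 2) * (Q n + Q n ^ 2 / 2)) :
    ∃ δ0 : ℝ, 0 < δ0 ∧ 2 * (1 + δ0) * ((B - 1) / B) ^ 2 < 1 ∧
      ∃ c1 : ℝ, 0 < c1 ∧ ∀ n, (∀ m ≤ n, P m ≤ δ0 * B * (B - 1) / 4) →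
        Q (n + 1) ≤ 2 * ((B - 1) / B) ^ 2 * (1 + δ0) * (Q n + Q n ^ 2 / 2) ∧
        Q n ≤ c1 * (2 * (1 + δ0) * ((B - 1) / B) ^ 2) ^ n * Q 0 := by
  have hBpos : (0:ℝ) < B := by linarith
  have hBm1 : (0:ℝ) < B - 1 := by linarith
  have hBne : B ≠ 0 := ne_of_gt hBpos
  have hBm1ne : B - 1 ≠ 0 := ne_of_gt hBm1
  set r : ℝ := 2 * ((B - 1) / B) ^ 2 with hrdef
  have hr0 : 0 < r := by positivity
  have hsqrt2 : Real.sqrt 2 ^ 2 = 2 := Real.sq_sqrt (by norm_num)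
  have hr1 : r < 1 := by
    have hBlt : B - 2 < Real.sqrt 2 := by linarith
    have h1 : 2 * (B - 1) ^ 2 < B ^ 2 := by nlinarith [Real.sqrt_nonneg 2]
    have : r = 2 * (B - 1) ^ 2 / B ^ 2 := by rw [hrdef, div_pow]; ring
    rw [this, div_lt_one (by positivity)]
    exact h1
  set s : ℝ := r * (1 + Q 0 / 2) with hsdef
  have hQ0nn := hQnn 0
  have hs0 : 0 < s := by positivity
  have hrs : r ≤ s := by nlinarith
  have hs1 : s < 1 := by
    have h1 : Q 0 + 2 < (B / (B - 1)) ^ 2 := by linarith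
    have h2 : s = ((B - 1) / B) ^ 2 * (Q 0 + 2) := by rw [hsdef, hrdef]; ring
    have h3 : ((B - 1) / B) ^ 2 * (B / (B - 1)) ^ 2 = 1 := by
      field_simp
    calc s = ((B - 1) / B) ^ 2 * (Q 0 + 2) := h2
      _ < ((B - 1) / B) ^ 2 * (B / (B - 1)) ^ 2 := by
          apply mul_lt_mul_of_pos_left h1 (by positivity)
      _ = 1 := h3
  set δ0 : ℝ := (1 - s) / (2 * s) with hδdef
  have hδpos : 0 < δ0 := by
    apply div_pos (by linarith) (by linarith)
  have hδs : (1 + δ0) * s = (1 + s) / 2 := by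
    rw [hδdef]
    field_simp
    ring
  have hσ1 : (1 + δ0) * s < 1 := by rw [hδs]; linarith
  have hρσ : (1 + δ0) * r ≤ (1 + δ0) * s := by nlinarith
  have hρ0 : 0 < (1 + δ0) * r := mul_pos (by linarith) hr0
  have hρ1 : (1 + δ0) * r < 1 := lt_of_le_of_lt hρσ hσ1
  set σ : ℝ := (1 + δ0) * s with hσdef
  set ρ : ℝ := (1 + δ0) * r with hρdef
  have hσ0 : 0 < σ := mul_pos (by linarith) hs0
  have hQ0pos2 : (0:ℝ) ≤ Q 0 := hQ0nn
  clear_value r s δ0 σ ρ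
  have hfac : ∀ j : ℕ, (0:ℝ) ≤ 1 + σ ^ j * Q 0 / 2 := fun j => by
    have := mul_nonneg (pow_nonneg hσ0.le j) hQ0nn; linarith
  have hXnn : ∀ k, (0:ℝ) ≤ Q k + Q k ^ 2 / 2 := fun k => by
    have h1 := hQnn k; have h2 := sq_nonneg (Q k); linarith
  -- E bound under the P hypothesis
  have hEb : ∀ m, P m ≤ δ0 * B * (B - 1) / 4 → E m ≤ 1 + δ0 := by
    intro m hm
    have h1 : 4 * P m / (B * (B - 1)) ≤ δ0 := by
      rw [div_le_iff₀ (by positivity)]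
      nlinarith
    linarith [hE m]
  -- Claim A: Q n ≤ σ^n * Q 0
  have keyA : ∀ n, (∀ m ≤ n, P m ≤ δ0 * B * (B - 1) / 4) → Q n ≤ σ ^ n * Q 0 := by
    intro n
    induction n with
    | zero => intro _; simp
    | succ k ih =>
      intro hP
      have hQk := ih (fun m hm => hP m (le_trans hm (Nat.le_succ k)))
      have hEk := hEb k (hP k (Nat.le_succ k))
      have hQknn := hQnn k
      have hσk1 : σ ^ k ≤ 1 := pow_le_one₀ (le_of_lt hσ0) (le_of_lt hσ1)
      have hQkQ0 : Q k ≤ Q 0 := le_trans hQk (by nlinarith)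
      have hX : 0 ≤ Q k + Q k ^ 2 / 2 := hXnn k
      have h1 : Q (k + 1) ≤ (1 + δ0) * r * (Q k + Q k ^ 2 / 2) := by
        rw [hrec k]
        have := mul_le_mul_of_nonneg_right (mul_le_mul_of_nonneg_right hEk (le_of_lt hr0)) hX
        linarith
      have h2 : Q k + Q k ^ 2 / 2 ≤ Q k * (1 + Q 0 / 2) := by
        have hm := mul_le_mul_of_nonneg_left hQkQ0 hQknn
        have hsq : Q k ^ 2 = Q k * Q k := sq (Q k)
        linarith [hm, hsq.le, hsq.ge]
      have h3 : Q (k + 1) ≤ (1 + δ0) * r * (Q k * (1 + Q 0 / 2)) := by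
        refine le_trans h1 (mul_le_mul_of_nonneg_left h2 (mul_nonneg (by linarith) hr0.le))
      have h4 : (1 + δ0) * r * (Q k * (1 + Q 0 / 2)) = σ * Q k := by
        rw [hσdef, hsdef]; ring
      calc Q (k + 1) ≤ σ * Q k := by rw [← h4]; exact h3
        _ ≤ σ * (σ ^ k * Q 0) := mul_le_mul_of_nonneg_left hQk (le_of_lt hσ0)
        _ = σ ^ (k + 1) * Q 0 := by ring
  -- geometric sum bound
  have hgeom : ∀ n : ℕ, (∑ j ∈ Finset.range n, σ ^ j) ≤ (1 - σ)⁻¹ := by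
    intro n
    rw [geom_sum_eq (ne_of_lt hσ1) n]
    have h1σ : 0 < 1 - σ := by linarith
    have heq : (σ ^ n - 1) / (σ - 1) = (1 - σ ^ n) / (1 - σ) := by
      rw [div_eq_div_iff (by intro h; rw [sub_eq_zero] at h; exact (ne_of_lt hσ1) h)
        (ne_of_gt h1σ)]
      ring
    rw [heq, div_le_iff₀ h1σ, inv_mul_cancel₀ (ne_of_gt h1σ)]
    have hσn : 0 ≤ σ ^ n := le_of_lt (pow_pos hσ0 n)
    linarith
  set c1 : ℝ := Real.exp (Q 0 / 2 * (1 - σ)⁻¹) with hc1def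
  have hc1pos : 0 < c1 := Real.exp_pos _
  -- product bound
  have hprod : ∀ n : ℕ, (∏ j ∈ Finset.range n, (1 + σ ^ j * Q 0 / 2)) ≤ c1 := by
    intro n
    calc (∏ j ∈ Finset.range n, (1 + σ ^ j * Q 0 / 2))
        ≤ ∏ j ∈ Finset.range n, Real.exp (σ ^ j * Q 0 / 2) := by
          apply Finset.prod_le_prod
          · intro i _; exact hfac i
          · intro i _; linarith [Real.add_one_le_exp (σ ^ i * Q 0 / 2)]
      _ = Real.exp (∑ j ∈ Finset.range n, σ ^ j * Q 0 / 2) :=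
          (Real.exp_sum _ _).symm
      _ ≤ c1 := by
          rw [hc1def]
          apply Real.exp_le_exp.2
          have : (∑ j ∈ Finset.range n, σ ^ j * Q 0 / 2)
              = (∑ j ∈ Finset.range n, σ ^ j) * (Q 0 / 2) := by
            rw [Finset.sum_mul]; congr 1; ext j; ring
          rw [this]
          have := hgeom n
          nlinarith
  have hprodnn : ∀ n : ℕ, 0 ≤ (∏ j ∈ Finset.range n, (1 + σ ^ j * Q 0 / 2)) := by
    intro n
    apply Finset.prod_nonneg
    intro i _; exact hfac i
  -- Claim B
  have keyB : ∀ n, (∀ m ≤ n, P m ≤ δ0 * B * (B - 1) / 4) →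
      Q n ≤ (∏ j ∈ Finset.range n, (1 + σ ^ j * Q 0 / 2)) * ρ ^ n * Q 0 := by
    intro n
    induction n with
    | zero => intro _; simp
    | succ k ih =>
      intro hP
      have hP' : ∀ m ≤ k, P m ≤ δ0 * B * (B - 1) / 4 :=
        fun m hm => hP m (le_trans hm (Nat.le_succ k))
      have hQk := ih hP'
      have hQkA := keyA k hP'
      have hEk := hEb k (hP k (Nat.le_succ k))
      have hQknn := hQnn k
      have hX : 0 ≤ Q k + Q k ^ 2 / 2 := hXnn k
      have h1 : Q (k + 1) ≤ ρ * (Q k + Q k ^ 2 / 2) := by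
        rw [hrec k, hρdef]
        have := mul_le_mul_of_nonneg_right (mul_le_mul_of_nonneg_right hEk (le_of_lt hr0)) hX
        linarith
      have h2 : Q k + Q k ^ 2 / 2 ≤ (1 + σ ^ k * Q 0 / 2) * Q k := by
        have hm := mul_le_mul_of_nonneg_left hQkA hQknn
        have hsq : Q k ^ 2 = Q k * Q k := sq (Q k)
        linarith [hm, hsq.le, hsq.ge]
      have h3 : Q (k + 1) ≤ ρ * ((1 + σ ^ k * Q 0 / 2) * Q k) :=
        le_trans h1 (mul_le_mul_of_nonneg_left h2 (le_of_lt hρ0))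
      have hfacnn : (0:ℝ) ≤ 1 + σ ^ k * Q 0 / 2 := hfac k
      calc Q (k + 1) ≤ ρ * ((1 + σ ^ k * Q 0 / 2) * Q k) := h3
        _ ≤ ρ * ((1 + σ ^ k * Q 0 / 2) *
              ((∏ j ∈ Finset.range k, (1 + σ ^ j * Q 0 / 2)) * ρ ^ k * Q 0)) := by
            apply mul_le_mul_of_nonneg_left _ (le_of_lt hρ0)
            exact mul_le_mul_of_nonneg_left hQk hfacnn
        _ = (∏ j ∈ Finset.range (k + 1), (1 + σ ^ j * Q 0 / 2)) * ρ ^ (k + 1) * Q 0 := by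
            rw [Finset.prod_range_succ]; ring
  have hgoal1 : 2 * (1 + δ0) * ((B - 1) / B) ^ 2 = ρ := by rw [hρdef, hrdef]; ring
  refine ⟨δ0, hδpos, hgoal1 ▸ hρ1, c1, hc1pos, fun n hP => ⟨?_, ?_⟩⟩
  · have hEn := hEb n (hP n le_rfl)
    have hX : 0 ≤ Q n + Q n ^ 2 / 2 := hXnn n
    rw [hrec n]
    have h := mul_le_mul_of_nonneg_right (mul_le_mul_of_nonneg_right hEn (le_of_lt hr0)) hX
    linarith [h]
  · have := keyB n hP
    have hρn : (0:ℝ) ≤ ρ ^ n := pow_nonneg hρ0.le n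
    calc Q n ≤ (∏ j ∈ Finset.range n, (1 + σ ^ j * Q 0 / 2)) * ρ ^ n * Q 0 := this
      _ ≤ c1 * ρ ^ n * Q 0 := by
          apply mul_le_mul_of_nonneg_right _ hQ0nn
          exact mul_le_mul_of_nonneg_right (hprod n) hρn
      _ = c1 * (2 * (1 + δ0) * ((B - 1) / B) ^ 2) ^ n * Q 0 := by
          rw [hρdef, hrdef]; ring
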